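/- For any binary sequence s and any integer k ≥ 4, f(s) ≥ K(s)/(k−1), where K(s) is the number of distinct substrings of length k (k-mers) occurring in s. -/

import Mathlib

/-- A tandem duplication: `x = a ++ b ++ c` becomes `y = a ++ b ++ b ++ c` with `b` nonempty. -/
def Dup (x y : List Bool) : Prop :=
  ∃ a b c : List Bool, b ≠ [] ∧ x = a ++ b ++ c ∧ y = a ++ (b ++ b) ++ c

/-- `DupSteps k x y` : `y` is obtained from `x` by exactly `k` tandem duplications. -/
def DupSteps : ℕ → List Bool → List Bool → Prop
  | 0 => fun x y => x = y
  | k + 1 => fun x y => ∃ z, Dup x z ∧ DupSteps k z y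

/-- A binary sequence is square-free if it contains no nonempty factor of the form `b ++ b`. -/
def SqFree (s : List Bool) : Prop :=
  ¬ ∃ a b c : List Bool, b ≠ [] ∧ s = a ++ (b ++ b) ++ c

/-- Duplication distance from `s` to its (square-free) root. -/
noncomputable def ddist (s : List Bool) : ℕ :=
  sInf {k | ∃ r : List Bool, SqFree r ∧ DupSteps k r s}

/-- `fmax n` : maximum duplication distance to the root over binary sequences of length `n`. -/
noncomputable def fmax (n : ℕ) : ℕ :=
  sSup (ddist '' {s : List Bool | s.length = n})

/-! ### Auxiliary lemmas -/

/-- The set of `k`-mers of `x`. -/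
def KS (k : ℕ) (x : List Bool) : Set (List Bool) :=
  {w : List Bool | w.length = k ∧ w <:+: x}

lemma window_eq {w x s t : List Bool} {k : ℕ} (hw : w.length = k)
    (hx : x = s ++ w ++ t) : (x.drop s.length).take k = w := by
  subst hx
  rw [List.append_assoc, List.drop_left, List.take_left' hw]

lemma KS_subset_window (k : ℕ) (x : List Bool) :
    KS k x ⊆ (fun i => (x.drop i).take k) '' Set.Iic x.length := by
  rintro w ⟨hw, s, t, rfl⟩
  exact ⟨s.length, by simp, window_eq hw rfl⟩

lemma KS_finite (k : ℕ) (x : List Bool) : (KS k x).Finite :=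
  Set.Finite.subset ((Set.finite_Iic x.length).image _) (KS_subset_window k x)

lemma dup_count {x y : List Bool} {k : ℕ} (h : Dup x y) :
    (KS k y).ncard ≤ (KS k x).ncard + (k - 1) := by
  obtain ⟨a, b, c, hb, rfl, rfl⟩ := h
  set A := a.length
  set B := b.length
  set N : Set (List Bool) :=
    (fun i => ((a ++ (b ++ b) ++ c).drop i).take k) ''
      ↑(Finset.Ico (A + B - (k - 1)) (A + B)) with hN
  have hbpos : 0 < B := List.length_pos_iff.mpr hb
  have hsub : KS k (a ++ (b ++ b) ++ c) ⊆ KS k (a ++ b ++ c) ∪ N := by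
    rintro w ⟨hw, s, t, hy⟩
    set i := s.length with hi
    by_cases h1 : i + k ≤ A + B
    · -- w is inside a ++ b, a prefix of x
      left
      refine ⟨hw, ?_⟩
      have hsw : s ++ w <+: a ++ b := by
        apply List.prefix_of_prefix_length_le (l₂ := a ++ b)
          (l₃ := a ++ (b ++ b) ++ c)
        · exact ⟨t, by rw [← hy]⟩
        · exact ⟨b ++ c, by simp⟩
        · simp only [List.length_append, hw]; omega
      calc w <:+: s ++ w := (List.suffix_append s w).isInfix
        _ <:+: a ++ b := hsw.isInfix
        _ <:+: a ++ b ++ c := (List.prefix_append _ _).isInfix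
    · by_cases h2 : A + B ≤ i
      · -- w is inside b ++ c, a suffix of x
        left
        refine ⟨hw, ?_⟩
        have hdrop : (a ++ (b ++ b) ++ c).drop i = w ++ t := by
          rw [← hy, hi, List.append_assoc, List.drop_left]
        have hw1 : w <+: (a ++ (b ++ b) ++ c).drop i := hdrop ▸ List.prefix_append w t
        have hd2 : (a ++ (b ++ b) ++ c).drop i = (b ++ c).drop (i - (A + B)) := by
          have hx : a ++ (b ++ b) ++ c = (a ++ b) ++ (b ++ c) := by simp
          rw [hx, List.drop_append,
            List.drop_eq_nil_of_le (by simpa using h2), List.nil_append]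
          congr 1
          simp
          rfl
        rw [hd2] at hw1
        calc w <:+: (b ++ c).drop (i - (A + B)) := hw1.isInfix
          _ <:+: b ++ c := (List.drop_suffix _ _).isInfix
          _ <:+: a ++ b ++ c := by
            rw [List.append_assoc]; exact (List.suffix_append a (b ++ c)).isInfix
      · -- w crosses the boundary at A + B
        right
        refine ⟨i, ?_, window_eq hw hy.symm⟩
        simp only [Finset.coe_Ico, Set.mem_Ico]
        omega
  have hfin : (KS k (a ++ b ++ c) ∪ N).Finite :=
    (KS_finite _ _).union ((Finset.Ico _ _).finite_toSet.image _)
  calc (KS k (a ++ (b ++ b) ++ c)).ncard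
      ≤ (KS k (a ++ b ++ c) ∪ N).ncard := Set.ncard_le_ncard hsub hfin
    _ ≤ (KS k (a ++ b ++ c)).ncard + N.ncard :=
        Set.ncard_union_le _ _
    _ ≤ (KS k (a ++ b ++ c)).ncard + (k - 1) := by
        have : N.ncard ≤ k - 1 := by
          calc N.ncard ≤ (↑(Finset.Ico (A + B - (k - 1)) (A + B)) : Set ℕ).ncard :=
              Set.ncard_image_le (Finset.Ico _ _).finite_toSet
            _ = (Finset.Ico (A + B - (k - 1)) (A + B)).card := Set.ncard_coe_finset _
            _ ≤ k - 1 := by rw [Nat.card_Ico]; omega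
        omega

lemma steps_count {k : ℕ} : ∀ (m : ℕ) (r s : List Bool), DupSteps m r s →
    (KS k s).ncard ≤ (KS k r).ncard + m * (k - 1) := by
  intro m
  induction m with
  | zero => rintro r s rfl; simp
  | succ m ih =>
    rintro r s ⟨z, hdup, hsteps⟩
    have h1 := dup_count (k := k) hdup
    have h2 := ih z s hsteps
    calc (KS k s).ncard ≤ (KS k z).ncard + m * (k - 1) := h2
      _ ≤ (KS k r).ncard + (k - 1) + m * (k - 1) := by omega
      _ = (KS k r).ncard + (m + 1) * (k - 1) := by ring

lemma four_square (x0 x1 x2 x3 : Bool) (rest : List Bool) :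
    ∃ a b c : List Bool, b ≠ [] ∧
      (x0 :: x1 :: x2 :: x3 :: rest) = a ++ (b ++ b) ++ c := by
  cases x0 <;> cases x1 <;> cases x2 <;> cases x3 <;>
  first
  | exact ⟨[], [false], _, by simp, rfl⟩
  | exact ⟨[], [true], _, by simp, rfl⟩
  | exact ⟨[false], [true], _, by simp, rfl⟩
  | exact ⟨[true], [false], _, by simp, rfl⟩
  | exact ⟨[false, true], [false], _, by simp, rfl⟩
  | exact ⟨[true, false], [true], _, by simp, rfl⟩
  | exact ⟨[], [false, true], _, by simp, rfl⟩
  | exact ⟨[], [true, false], _, by simp, rfl⟩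

lemma sqfree_length_le {r : List Bool} (h : SqFree r) : r.length ≤ 3 := by
  by_contra hlen
  rcases r with _ | ⟨x0, _ | ⟨x1, _ | ⟨x2, _ | ⟨x3, rest⟩⟩⟩⟩ <;>
    first
      | exact h (four_square _ _ _ _ _)
      | simp at hlen

lemma dupSteps_snoc {m : ℕ} : ∀ {r x y : List Bool},
    DupSteps m r x → Dup x y → DupSteps (m + 1) r y := by
  induction m with
  | zero => rintro r x y rfl hd; exact ⟨y, hd, rfl⟩
  | succ m ih => rintro r x y ⟨z, hz, hst⟩ hd; exact ⟨z, hz, ih hst hd⟩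

lemma exists_root_aux : ∀ (n : ℕ) (s : List Bool), s.length ≤ n →
    ∃ m r, SqFree r ∧ DupSteps m r s := by
  intro n
  induction n with
  | zero =>
    intro s hs
    have hnil : s = [] := List.length_eq_zero_iff.mp (Nat.le_zero.mp hs)
    subst hnil
    refine ⟨0, [], ?_, rfl⟩
    rintro ⟨a, b, c, hb, he⟩
    have hlen := congrArg List.length he
    have hbpos := List.length_pos_iff.mpr hb
    simp only [List.length_nil, List.length_append] at hlen
    omega
  | succ n ih =>
    intro s hs
    by_cases h : SqFree s
    · exact ⟨0, s, h, rfl⟩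
    · obtain ⟨a, b, c, hb, rfl⟩ := not_not.mp h
      have hbpos := List.length_pos_iff.mpr hb
      obtain ⟨m, r, hr, hst⟩ := ih (a ++ b ++ c) (by simp at hs ⊢; omega)
      exact ⟨m + 1, r, hr, dupSteps_snoc hst ⟨a, b, c, hb, rfl, rfl⟩⟩

theorem kmer_lower_bound (s : List Bool) (hs : s ≠ []) (k : ℕ) (hk : 4 ≤ k) :
    (Set.ncard {w : List Bool | w.length = k ∧ w <:+: s} : ℝ) / ((k : ℝ) - 1) ≤ ddist s := by
  have hne : {m | ∃ r : List Bool, SqFree r ∧ DupSteps m r s}.Nonempty := by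
    obtain ⟨m, r, hr, hst⟩ := exists_root_aux s.length s le_rfl
    exact ⟨m, r, hr, hst⟩
  obtain ⟨r, hr, hst⟩ := Nat.sInf_mem hne
  have hcount : (KS k s).ncard ≤ (KS k r).ncard + ddist s * (k - 1) :=
    steps_count (ddist s) r s hst
  have hKS_r : KS k r = ∅ := by
    ext w
    simp only [KS, Set.mem_setOf_eq, Set.mem_empty_iff_false, iff_false, not_and]
    intro hw hinf
    have h1 := hinf.length_le
    have h2 := sqfree_length_le hr
    omega
  rw [hKS_r, Set.ncard_empty, zero_add] at hcount
  have hpos : (0 : ℝ) < (k : ℝ) - 1 := by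
    have : (4 : ℝ) ≤ (k : ℝ) := by exact_mod_cast hk
    linarith
  rw [div_le_iff₀ hpos]
  have : ((KS k s).ncard : ℝ) ≤ (ddist s : ℝ) * ((k : ℝ) - 1) := by
    have h1 : ((k - 1 : ℕ) : ℝ) = (k : ℝ) - 1 := by
      rw [Nat.cast_sub (by omega)]; simp
    calc ((KS k s).ncard : ℝ) ≤ ((ddist s * (k - 1) : ℕ) : ℝ) := by exact_mod_cast hcount
      _ = (ddist s : ℝ) * ((k : ℝ) - 1) := by rw [Nat.cast_mul, h1]
  exact this
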